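/- For every positive integer k, the set S = {1, 2, 3, …, k} of the first k positive integers satisfies CM(S) = ⌊log₂ k⌋ + 1; in particular the lower bound ⌊log₂ k⌋ + 1 on the Cookie Monster number of a set of k jars is attained. -/

import Mathlib

lemma two_pow_sum (n : ℕ) : ∀ s, s < 2 ^ n → ∃ I : Finset (Fin n), ∑ i ∈ I, 2 ^ (i : ℕ) = s := by
  induction n with
  | zero => intro s hs; interval_cases s; exact ⟨∅, by simp⟩
  | succ n ih =>
    intro s hs
    by_cases h : s < 2 ^ n
    · obtain ⟨I, hI⟩ := ih s h
      refine ⟨I.map Fin.castSuccEmb, ?_⟩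
      rw [Finset.sum_map]
      simpa using hI
    · push_neg at h
      obtain ⟨I, hI⟩ := ih (s - 2 ^ n) (by omega)
      refine ⟨insert (Fin.last n) (I.map Fin.castSuccEmb), ?_⟩
      rw [Finset.sum_insert (by simp [Fin.ext_iff]; intro x _; omega), Finset.sum_map]
      simp only [Fin.val_last]
      have h2 : ∑ x ∈ I, 2 ^ ((Fin.castSuccEmb x : Fin (n + 1)) : ℕ) = s - 2 ^ n := by
        rw [← hI]; apply Finset.sum_congr rfl; intro x _; simp
      omega

/-- The Cookie Monster number of a finite set `S` of jar contents: the least `n`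
for which there exist positive move amounts `a_1, …, a_n` such that every `s ∈ S`
is the sum of a subset of the move amounts. -/
noncomputable def CM (S : Finset ℕ) : ℕ :=
  sInf {n : ℕ | ∃ a : Fin n → ℕ, (∀ i, 0 < a i) ∧
    ∀ s ∈ S, ∃ I : Finset (Fin n), ∑ i ∈ I, a i = s}

/-- The set `{1, 2, …, k}` attains the lower bound `⌊log₂ k⌋ + 1`. -/
theorem cm_of_initial_segment (k : ℕ) (hk : 0 < k) :
    CM (Finset.Icc 1 k) = Nat.log 2 k + 1 := by
  rw [CM]
  set n₀ := Nat.log 2 k + 1 with hn₀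
  have hmem : n₀ ∈ {n : ℕ | ∃ a : Fin n → ℕ, (∀ i, 0 < a i) ∧
      ∀ s ∈ Finset.Icc 1 k, ∃ I : Finset (Fin n), ∑ i ∈ I, a i = s} := by
    refine ⟨fun i => 2 ^ (i : ℕ), fun i => by positivity, fun s hs => ?_⟩
    apply two_pow_sum
    have := Nat.lt_pow_succ_log_self (by norm_num : 1 < 2) k
    simp only [Finset.mem_Icc] at hs
    exact lt_of_le_of_lt hs.2 (hn₀ ▸ this)
  apply le_antisymm (Nat.sInf_le hmem)
  refine le_csInf ⟨n₀, hmem⟩ ?_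
  rintro n ⟨a, -, ha⟩
  -- build injective map from Icc 0 k into Finset (Fin n)
  have key : k + 1 ≤ 2 ^ n := by
    classical
    set f : ℕ → Finset (Fin n) := fun s =>
      if h : ∃ I : Finset (Fin n), ∑ i ∈ I, a i = s then h.choose else ∅ with hf
    have hsum : ∀ s ∈ Finset.Icc 0 k, ∑ i ∈ f s, a i = s := by
      intro s hs
      simp only [Finset.mem_Icc] at hs
      rcases Nat.eq_zero_or_pos s with rfl | hpos
      · have h : ∃ I : Finset (Fin n), ∑ i ∈ I, a i = 0 := ⟨∅, by simp⟩
        simp only [hf, dif_pos h]; exact h.choose_spec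
      · have h := ha s (Finset.mem_Icc.mpr ⟨hpos, hs.2⟩)
        simp only [hf, dif_pos h]; exact h.choose_spec
    have hinj : Set.InjOn f (Finset.Icc 0 k) := by
      intro x hx y hy hxy
      rw [← hsum x hx, ← hsum y hy, hxy]
    calc k + 1 = (Finset.Icc 0 k).card := by simp
      _ ≤ (Finset.univ : Finset (Finset (Fin n))).card :=
          Finset.card_le_card_of_injOn f (fun _ _ => Finset.mem_univ _) hinj
      _ = 2 ^ n := by simp
  have hlog : Nat.log 2 k < n :=
    (Nat.log_lt_iff_lt_pow (by norm_num) hk.ne').mpr (by omega)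
  omega
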